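/- (Abstract gradient descent convergence) Let X be a real inner product space, Y ⊆ X, f : X → ℝ, (αₙ) nonnegative reals with ∑αᵢ = ∞, and (bₙ), (cₙ), (dₙ) nonnegative reals with ∑αᵢbᵢ < ∞, ∑cᵢ² < ∞, ∑dᵢ < ∞. Let x* ∈ Y, (xₙ) ⊆ Y, (uₙ) ⊆ X, and a, p, θ > 0 satisfy for all n: (i) f(x*) ≤ f(xₙ); (ii) f(xₙ) − f(y) ≤ ⟨uₙ, xₙ − y⟩ + bₙ for all y ∈ Y; (iii) ‖x_{n+1} − xₙ‖ ≤ cₙ; (iv) ⟨αₙuₙ, xₙ − x*⟩ ≤ a⟨xₙ − x_{n+1}, xₙ − x*⟩ + dₙ; (v) ‖uₙ‖ ≤ p; (vi) p·cₙ + bₙ ≤ θαₙ. Then f(xₙ) → f(x*). -/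

import Mathlib

open Filter Finset

/-- Abstract gradient descent convergence: in a real inner product space X with
Y ⊆ X, f : X → ℝ, step sizes (αₙ) with ∑αᵢ = ∞, error terms (bₙ), (cₙ), (dₙ)
with ∑αᵢbᵢ < ∞, ∑cᵢ² < ∞, ∑dᵢ < ∞, a point x* ∈ Y acting as a minimizer,
(xₙ) ⊆ Y, approximate gradients (uₙ) and constants a, p, θ > 0 satisfying
conditions (i)–(vi), we have f(xₙ) → f(x*). -/
theorem stmt19 {X : Type*} [NormedAddCommGroup X] [InnerProductSpace ℝ X]
    (Y : Set X) (f : X → ℝ)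
    (α b c d : ℕ → ℝ)
    (hα : ∀ n, 0 ≤ α n) (hb : ∀ n, 0 ≤ b n) (hc : ∀ n, 0 ≤ c n) (hd : ∀ n, 0 ≤ d n)
    (hdiv : Tendsto (fun n => ∑ i ∈ Finset.range n, α i) atTop atTop)
    (hab : Summable (fun i => α i * b i))
    (hc2 : Summable (fun i => c i ^ 2))
    (hdsum : Summable d)
    (xstar : X) (hxstar : xstar ∈ Y)
    (x : ℕ → X) (hx : ∀ n, x n ∈ Y) (u : ℕ → X)
    (a p θ : ℝ) (ha : 0 < a) (hp : 0 < p) (hθ : 0 < θ)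
    (hmin : ∀ n, f xstar ≤ f (x n))
    (hgrad : ∀ n, ∀ y ∈ Y, f (x n) - f y ≤ inner ℝ (u n) (x n - y) + b n)
    (hdesc1 : ∀ n, ‖x (n + 1) - x n‖ ≤ c n)
    (hdesc2 : ∀ n, inner ℝ (α n • u n) (x n - xstar) ≤
      a * inner ℝ (x n - x (n + 1)) (x n - xstar) + d n)
    (hubd : ∀ n, ‖u n‖ ≤ p)
    (hcoef : ∀ n, p * c n + b n ≤ θ * α n) :
    Tendsto (fun n => f (x n)) atTop (nhds (f xstar)) := by
  classical
  set e : ℕ → ℝ := fun n => f (x n) - f xstar with he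
  clear_value e
  have he0 : ∀ n, 0 ≤ e n := fun n => by
    have := hmin n; simp only [he]; linarith
  -- per-step key inequality
  have key : ∀ n, α n * e n ≤ a/2 * (‖x n - xstar‖^2 - ‖x (n+1) - xstar‖^2)
      + (a/2 * c n ^ 2 + d n + α n * b n) := by
    intro n
    have h1 : e n ≤ inner ℝ (u n) (x n - xstar) + b n := by
      simp only [he]; exact hgrad n xstar hxstar
    have h2 : α n * inner ℝ (u n) (x n - xstar) = inner ℝ (α n • u n) (x n - xstar) :=
      (real_inner_smul_left _ _ _).symm
    have h3 := hdesc2 n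
    have hid : (inner ℝ (x n - x (n+1)) (x n - xstar) : ℝ)
        = (‖x n - x (n+1)‖^2 + ‖x n - xstar‖^2 - ‖x (n+1) - xstar‖^2)/2 := by
      have hns := @norm_sub_sq_real X _ _ (x n - xstar) (x n - x (n+1))
      have h4 : (x n - xstar) - (x n - x (n+1)) = x (n+1) - xstar := by abel
      rw [h4] at hns
      have h5 : (inner ℝ (x n - xstar) (x n - x (n+1)) : ℝ)
          = inner ℝ (x n - x (n+1)) (x n - xstar) := real_inner_comm _ _
      linarith
    have hcn : ‖x n - x (n+1)‖ ≤ c n := by rw [norm_sub_rev]; exact hdesc1 n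
    have hsq : ‖x n - x (n+1)‖^2 ≤ c n ^ 2 :=
      pow_le_pow_left₀ (norm_nonneg _) hcn 2
    have h6 : α n * e n ≤ inner ℝ (α n • u n) (x n - xstar) + α n * b n := by
      calc α n * e n ≤ α n * (inner ℝ (u n) (x n - xstar) + b n) :=
            mul_le_mul_of_nonneg_left h1 (hα n)
        _ = inner ℝ (α n • u n) (x n - xstar) + α n * b n := by rw [← h2]; ring
    rw [hid] at h3
    nlinarith [mul_le_mul_of_nonneg_left hsq (by positivity : (0:ℝ) ≤ a/2)]
  -- summability of ∑ α n * e n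
  have hg0 : ∀ n, 0 ≤ a/2 * c n ^ 2 + d n + α n * b n := fun n => by
    have := hd n; have := mul_nonneg (hα n) (hb n)
    have : 0 ≤ a/2 * c n ^2 := by positivity
    positivity
  have hgsum : Summable (fun n => a/2 * c n ^ 2 + d n + α n * b n) :=
    ((hc2.mul_left (a/2)).add hdsum).add hab
  have hsum : Summable (fun n => α n * e n) := by
    apply summable_of_sum_range_le (fun n => mul_nonneg (hα n) (he0 n))
      (c := a/2 * ‖x 0 - xstar‖^2 + ∑' i, (a/2 * c i ^ 2 + d i + α i * b i))
    intro n
    have h1 : ∑ i ∈ range n, (α i * e i)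
        ≤ ∑ i ∈ range n, (a/2 * (‖x i - xstar‖^2 - ‖x (i+1) - xstar‖^2)
            + (a/2 * c i ^ 2 + d i + α i * b i)) :=
      sum_le_sum fun i _ => key i
    have h2 : ∑ i ∈ range n, (a/2 * (‖x i - xstar‖^2 - ‖x (i+1) - xstar‖^2)
            + (a/2 * c i ^ 2 + d i + α i * b i))
        = a/2 * (‖x 0 - xstar‖^2 - ‖x n - xstar‖^2)
            + ∑ i ∈ range n, (a/2 * c i ^ 2 + d i + α i * b i) := by
      rw [sum_add_distrib, ← mul_sum, sum_range_sub' (fun i => ‖x i - xstar‖^2)]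
    have h3 : ∑ i ∈ range n, (a/2 * c i ^ 2 + d i + α i * b i)
        ≤ ∑' i, (a/2 * c i ^ 2 + d i + α i * b i) :=
      Summable.sum_le_tsum _ (fun i _ => hg0 i) hgsum
    nlinarith [sq_nonneg ‖x n - xstar‖, mul_nonneg (le_of_lt ha) (sq_nonneg ‖x n - xstar‖)]
  -- almost-monotonicity
  have hstep : ∀ n, e n ≤ e (n+1) + θ * α n := by
    intro n
    have h1 : f (x n) - f (x (n+1)) ≤ inner ℝ (u n) (x n - x (n+1)) + b n :=
      hgrad n _ (hx (n+1))
    have h2 : (inner ℝ (u n) (x n - x (n+1)) : ℝ) ≤ p * c n := by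
      calc (inner ℝ (u n) (x n - x (n+1)) : ℝ) ≤ ‖u n‖ * ‖x n - x (n+1)‖ :=
            real_inner_le_norm _ _
        _ ≤ p * c n := by
            apply mul_le_mul (hubd n) _ (norm_nonneg _) hp.le
            rw [norm_sub_rev]; exact hdesc1 n
    have h3 := hcoef n
    simp only [he]; linarith
  -- main limit
  have hmain : Tendsto e atTop (nhds 0) := by
    rw [Metric.tendsto_atTop]
    intro ε hε
    have hδ : 0 < ε^2/(4*θ) := by positivity
    obtain ⟨N, hN⟩ := Metric.tendsto_atTop.mp
      (tendsto_sum_nat_add (fun n => α n * e n)) (ε^2/(4*θ)) hδ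
    refine ⟨N, fun m hm => ?_⟩
    rw [Real.dist_eq, sub_zero, abs_of_nonneg (he0 m)]
    by_contra hcon
    push_neg at hcon
    -- tail sum bound at m
    have htail : ∑' k, α (k + m) * e (k + m) < ε^2/(4*θ) := by
      have := hN m hm
      rwa [Real.dist_eq, sub_zero,
        abs_of_nonneg (tsum_nonneg fun k => mul_nonneg (hα _) (he0 _))] at this
    have hsum' : Summable (fun k => α (k + m) * e (k + m)) :=
      (summable_nat_add_iff m).2 hsum
    set T : ℕ → ℝ := fun k => ∑ j ∈ range k, α (m + j) with hT
    clear_value T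
    -- T is unbounded
    have hex : ∃ k, ε/(2*θ) < T k := by
      obtain ⟨n, hn1, hn2⟩ := ((eventually_ge_atTop m).and
        (hdiv.eventually_gt_atTop (ε/(2*θ) + ∑ i ∈ range m, α i))).exists
      refine ⟨n - m, ?_⟩
      have hsplit : ∑ i ∈ range (m + (n - m)), α i
          = ∑ i ∈ range m, α i + ∑ j ∈ range (n - m), α (m + j) :=
        sum_range_add _ _ _
      rw [Nat.add_sub_cancel' hn1] at hsplit
      simp only [hT]
      linarith
    set K := Nat.find hex with hK
    have hKspec : ε/(2*θ) < T K := Nat.find_spec hex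
    have hKmin : ∀ k < K, T k ≤ ε/(2*θ) := fun k hk =>
      le_of_not_gt (Nat.find_min hex hk)
    clear_value K
    -- lower bound on e on the excursion
    have hlow : ∀ k, ε - θ * T k ≤ e (m + k) := by
      intro k
      induction k with
      | zero => simp [hT]; linarith
      | succ k ih =>
        have h1 := hstep (m + k)
        have h2 : T (k + 1) = T k + α (m + k) := by
          simp only [hT]; exact sum_range_succ _ _
        have : m + (k + 1) = (m + k) + 1 := by omega
        rw [this, h2]
        linarith
    have hhalf : ∀ k < K, ε/2 ≤ e (m + k) := by
      intro k hk
      have h1 := hlow k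
      have h2 := hKmin k hk
      have h3 : θ * T k ≤ θ * (ε/(2*θ)) := mul_le_mul_of_nonneg_left h2 hθ.le
      have h4 : θ * (ε/(2*θ)) = ε/2 := by field_simp
      rw [h4] at h3
      linarith
    -- the excursion contributes too much
    have h8 : ∑ k ∈ range K, α (k + m) * e (k + m) ≤ ∑' k, α (k + m) * e (k + m) :=
      Summable.sum_le_tsum _ (fun i _ => mul_nonneg (hα _) (he0 _)) hsum'
    have h9 : ε/2 * T K ≤ ∑ k ∈ range K, α (k + m) * e (k + m) := by
      rw [hT, mul_sum]
      apply sum_le_sum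
      intro k hk
      have hek := hhalf k (mem_range.mp hk)
      have : k + m = m + k := by omega
      rw [this]
      have := mul_le_mul_of_nonneg_left hek (hα (m + k))
      linarith
    have h10 : ε^2/(4*θ) < ε/2 * T K := by
      have := mul_lt_mul_of_pos_left hKspec (half_pos hε)
      have heq : ε/2 * (ε/(2*θ)) = ε^2/(4*θ) := by field_simp; ring
      linarith
    linarith
  have : (fun n => f (x n)) = fun n => e n + f xstar := by
    funext n; simp [he]
  rw [this]
  have := hmain.add (tendsto_const_nhds (x := f xstar) (f := atTop))
  simpa using this
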